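/- There is a universal constant c₀ > 0 such that the following holds. For all natural numbers n ≤ M with n ≥ 1 and M ≥ 4, there exist a finite certificate set C with |C| ≤ 2^(c₀ · (n + log₂(log₂ M) + 1)) and a verification algorithm A : Fin M → Finset (Fin M) → C → Bool such that for every finite simple graph G on a vertex set V with |V| = n and every injective identifier assignment Id : V → Fin M: there exists c ∈ C with A (Id u) ({Id v : v ∈ N(u)}) c = true for every vertex u ∈ V, if and only if G is bipartite (i.e., G admits a proper two-coloring). -/

import Mathlib

open Finset

private lemma aux_binom (a : ℕ) (ha : 1 ≤ a) : 2 * a ^ (a + 1) ≤ (a + 1) ^ (a + 1) := by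
  have hb : (a + 1) ^ (a + 1)
      = ∑ i ∈ Finset.range (a + 1 + 1), a ^ i * 1 ^ (a + 1 - i) * ((a + 1).choose i) :=
    add_pow a 1 (a + 1)
  have hsub : ({a, a + 1} : Finset ℕ) ⊆ Finset.range (a + 1 + 1) := by
    intro x hx
    simp only [Finset.mem_insert, Finset.mem_singleton] at hx
    rcases hx with rfl | rfl <;> simp [Finset.mem_range] <;> omega
  have hle : ∑ i ∈ ({a, a + 1} : Finset ℕ), a ^ i * 1 ^ (a + 1 - i) * ((a + 1).choose i)
      ≤ ∑ i ∈ Finset.range (a + 1 + 1), a ^ i * 1 ^ (a + 1 - i) * ((a + 1).choose i) :=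
    Finset.sum_le_sum_of_subset hsub
  rw [Finset.sum_pair (by omega : a ≠ a + 1)] at hle
  simp only [one_pow, mul_one, Nat.choose_self, Nat.choose_succ_self_right] at hle
  have hb' : (a + 1) ^ (a + 1) = ∑ x ∈ Finset.range (a + 1 + 1), a ^ x * ((a + 1).choose x) := by
    rw [hb]; simp
  rw [← hb'] at hle
  have h1 : a ^ (a + 1) = a ^ a * a := pow_succ a a
  nlinarith [pow_pos (by omega : 0 < a) a]

private lemma key_pow (k : ℕ) (hk : 2 ≤ k) : 2 * (k - 1) ^ k ≤ k ^ k := by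
  obtain ⟨a, rfl⟩ : ∃ a, k = a + 1 := ⟨k - 1, by omega⟩
  simpa using aux_binom a (by omega)

private lemma count_ineq (n M : ℕ) (hn : 1 ≤ n) (hnM : n ≤ M) (hM : 4 ≤ M) :
    M ^ n * 2 ^ n * (2 ^ M - 2 ^ (M - n)) ^ (2 ^ n * (n * (Nat.log2 M + 2)))
      < 2 ^ (M * (2 ^ n * (n * (Nat.log2 M + 2)))) := by
  set L := Nat.log2 M + 2 with hL
  set m := 2 ^ n * (n * L) with hm
  have hsplit : (2:ℕ) ^ M - 2 ^ (M - n) = 2 ^ (M - n) * (2 ^ n - 1) := by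
    rw [Nat.mul_sub, mul_one, ← pow_add]
    congr 2
    omega
  have hMm : M * m = (M - n) * m + n * m := by
    have h : M - n + n = M := by omega
    calc M * m = (M - n + n) * m := by rw [h]
    _ = (M - n) * m + n * m := add_mul _ _ _
  rw [hsplit, hMm, pow_add, mul_pow, ← pow_mul]
  have hpos : 0 < (2:ℕ) ^ ((M - n) * m) := Nat.pow_pos (by norm_num)
  have hk2 : (2:ℕ) ≤ 2 ^ n := by
    calc (2:ℕ) = 2 ^ 1 := rfl
    _ ≤ 2 ^ n := Nat.pow_le_pow_right (by norm_num) hn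
  have main : M ^ n * 2 ^ n * (2 ^ n - 1) ^ m < 2 ^ (n * m) := by
    have key := key_pow (2 ^ n) hk2
    have h2M : 2 * M < 2 ^ L := by
      have h1 := Nat.lt_log2_self (n := M)
      have h2 : (2:ℕ) ^ L = 2 * 2 ^ (Nat.log2 M + 1) := by
        rw [hL, pow_succ, mul_comm]
      omega
    have h1 : (2 * M) ^ n < (2 ^ L) ^ n := Nat.pow_lt_pow_left h2M (by omega)
    have hppos : 0 < ((2:ℕ) ^ n - 1) ^ m := Nat.pow_pos (by omega)
    have h2 : 2 ^ (n * L) * (2 ^ n - 1) ^ m ≤ 2 ^ (n * m) := by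
      have e1 : (2 * ((2:ℕ) ^ n - 1) ^ (2 ^ n)) ^ (n * L) = 2 ^ (n * L) * (2 ^ n - 1) ^ m := by
        rw [mul_pow, ← pow_mul, hm]
      have e2 : ((2:ℕ) ^ n) ^ m = 2 ^ (n * m) := by rw [← pow_mul]
      calc 2 ^ (n * L) * (2 ^ n - 1) ^ m = (2 * (2 ^ n - 1) ^ (2 ^ n)) ^ (n * L) := e1.symm
      _ ≤ ((2 ^ n) ^ (2 ^ n)) ^ (n * L) := Nat.pow_le_pow_left key _
      _ = (2 ^ n) ^ m := by rw [← pow_mul, hm]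
      _ = 2 ^ (n * m) := e2
    calc M ^ n * 2 ^ n * (2 ^ n - 1) ^ m = (2 * M) ^ n * (2 ^ n - 1) ^ m := by
          rw [mul_pow]; ring
    _ < (2 ^ L) ^ n * (2 ^ n - 1) ^ m := by
          exact mul_lt_mul_of_pos_right h1 hppos
    _ = 2 ^ (n * L) * (2 ^ n - 1) ^ m := by rw [← pow_mul, mul_comm L n]
    _ ≤ 2 ^ (n * m) := h2
  calc M ^ n * 2 ^ n * (2 ^ ((M - n) * m) * (2 ^ n - 1) ^ m)
      = 2 ^ ((M - n) * m) * (M ^ n * 2 ^ n * (2 ^ n - 1) ^ m) := by ring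
  _ < 2 ^ ((M - n) * m) * 2 ^ (n * m) := by
        exact mul_lt_mul_of_pos_left main hpos

private def badE (M : ℕ) (S : Finset (Fin M)) (τ : Fin M → Bool) : Finset (Fin M → Bool) :=
  univ.filter (fun f => ∃ i ∈ S, f i ≠ τ i)

private def suppT (M : ℕ) (S : Finset (Fin M)) : Finset (Fin M → Bool) :=
  univ.filter (fun τ => ∀ i ∉ S, τ i = false)

private lemma mem_badE {M : ℕ} {S : Finset (Fin M)} {τ f : Fin M → Bool} :
    f ∈ badE M S τ ↔ ∃ i ∈ S, f i ≠ τ i := by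
  simp [badE]

private lemma mem_suppT {M : ℕ} {S : Finset (Fin M)} {τ : Fin M → Bool} :
    τ ∈ suppT M S ↔ ∀ i ∉ S, τ i = false := by
  simp [suppT]

private lemma badE_card {n M : ℕ} (hnM : n ≤ M) (S : Finset (Fin M)) (hScard : S.card = n)
    (τ : Fin M → Bool) : (badE M S τ).card ≤ 2 ^ M - 2 ^ (M - n) := by
  classical
  have hsum := Finset.card_filter_add_card_filter_not
    (s := (univ : Finset (Fin M → Bool))) (p := fun f => ∃ i ∈ S, f i ≠ τ i)
  have htot : (univ : Finset (Fin M → Bool)).card = 2 ^ M := by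
    rw [Finset.card_univ, Fintype.card_fun]
    simp
  have hagree : 2 ^ (M - n) ≤
      (univ.filter (fun f : Fin M → Bool => ¬ ∃ i ∈ S, f i ≠ τ i)).card := by
    have hcarddom : Fintype.card ({i : Fin M // i ∉ S} → Bool) = 2 ^ (M - n) := by
      rw [Fintype.card_fun, Fintype.card_bool]
      congr 1
      rw [Fintype.card_subtype_compl, Fintype.card_coe, Fintype.card_fin, hScard]
    have hkey := Finset.card_le_card_of_injOn
      (f := fun (σ : {i : Fin M // i ∉ S} → Bool) =>
        (fun i => if h : i ∈ S then τ i else σ ⟨i, h⟩ : Fin M → Bool))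
      (s := (univ : Finset ({i : Fin M // i ∉ S} → Bool)))
      (t := univ.filter (fun f : Fin M → Bool => ¬ ∃ i ∈ S, f i ≠ τ i))
      (by
        intro σ _
        simp only [Finset.mem_coe, Finset.mem_filter, Finset.mem_univ, true_and]
        push_neg
        intro i hi
        simp [hi])
      (by
        intro σ _ σ' _ hσ
        funext i
        have := congrFun hσ i.1
        simpa [i.2] using this)
    rwa [Finset.card_univ, hcarddom] at hkey
  have h2 : (2:ℕ) ^ (M - n) ≤ 2 ^ M := Nat.pow_le_pow_right (by norm_num) (Nat.sub_le M n)
  have heq : (badE M S τ).card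
      + (univ.filter (fun f : Fin M → Bool => ¬ ∃ i ∈ S, f i ≠ τ i)).card = 2 ^ M := by
    rw [htot] at hsum
    exact hsum
  exact Nat.le_sub_of_add_le (le_trans (Nat.add_le_add_left hagree _) (le_of_eq heq))

private lemma suppT_card {n M : ℕ} (S : Finset (Fin M)) (hScard : S.card = n) :
    (suppT M S).card ≤ 2 ^ n := by
  classical
  have hkey := Finset.card_le_card_of_injOn
    (f := fun (τ : Fin M → Bool) => (fun i : {i : Fin M // i ∈ S} => τ i.1))
    (s := suppT M S) (t := (univ : Finset ({i : Fin M // i ∈ S} → Bool)))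
    (fun τ _ => Finset.mem_univ _)
    (by
      intro τ hτ τ' hτ' heq
      have h1 : ∀ i ∉ S, τ i = false := mem_suppT.1 (Finset.mem_coe.1 hτ)
      have h2 : ∀ i ∉ S, τ' i = false := mem_suppT.1 (Finset.mem_coe.1 hτ')
      funext i
      by_cases hi : i ∈ S
      · exact congrFun heq ⟨i, hi⟩
      · rw [h1 i hi, h2 i hi])
  rwa [Finset.card_univ, Fintype.card_fun, Fintype.card_bool, Fintype.card_coe, hScard] at hkey

private lemma exists_universal (n M m : ℕ)
    (hcount : M ^ n * 2 ^ n * (2 ^ M - 2 ^ (M - n)) ^ m < 2 ^ (M * m)) (hnM : n ≤ M) :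
    ∃ g : Fin m → Fin M → Bool,
      ∀ S : Finset (Fin M), S.card = n → ∀ χ : Fin M → Bool,
        ∃ j : Fin m, ∀ i ∈ S, g j i = χ i := by
  classical
  by_contra hcon
  push_neg at hcon
  have hcover : (univ : Finset (Fin m → Fin M → Bool)) ⊆
      (univ.powersetCard n).biUnion (fun S =>
        (suppT M S).biUnion (fun τ => Fintype.piFinset (fun _ : Fin m => badE M S τ))) := by
    intro g _
    obtain ⟨S, hScard, χ, hχ⟩ := hcon g
    refine Finset.mem_biUnion.2 ⟨S, Finset.mem_powersetCard_univ.2 hScard, ?_⟩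
    refine Finset.mem_biUnion.2 ⟨fun i => if i ∈ S then χ i else false, ?_, ?_⟩
    · refine mem_suppT.2 ?_
      intro i hi
      simp [hi]
    · rw [Fintype.mem_piFinset]
      intro j
      obtain ⟨i, hiS, hne⟩ := hχ j
      exact mem_badE.2 ⟨i, hiS, by simpa [hiS] using hne⟩
  have htotal : (univ : Finset (Fin m → Fin M → Bool)).card = 2 ^ (M * m) := by
    rw [Finset.card_univ, Fintype.card_fun, Fintype.card_fun]
    simp [← pow_mul, mul_comm]
  have hchain : (2:ℕ) ^ (M * m) ≤ M ^ n * 2 ^ n * (2 ^ M - 2 ^ (M - n)) ^ m := by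
    rw [← htotal]
    calc (univ : Finset (Fin m → Fin M → Bool)).card
        ≤ ((univ.powersetCard n).biUnion (fun S =>
            (suppT M S).biUnion (fun τ => Fintype.piFinset (fun _ : Fin m => badE M S τ)))).card :=
          Finset.card_le_card hcover
    _ ≤ ∑ S ∈ univ.powersetCard n,
          ((suppT M S).biUnion (fun τ => Fintype.piFinset (fun _ : Fin m => badE M S τ))).card :=
          Finset.card_biUnion_le
    _ ≤ ∑ S ∈ univ.powersetCard n, 2 ^ n * (2 ^ M - 2 ^ (M - n)) ^ m := by
          apply Finset.sum_le_sum
          intro S hS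
          have hScard : S.card = n := Finset.mem_powersetCard_univ.1 hS
          calc ((suppT M S).biUnion (fun τ => Fintype.piFinset (fun _ : Fin m => badE M S τ))).card
              ≤ ∑ τ ∈ suppT M S, (Fintype.piFinset (fun _ : Fin m => badE M S τ)).card :=
                Finset.card_biUnion_le
          _ ≤ ∑ τ ∈ suppT M S, (2 ^ M - 2 ^ (M - n)) ^ m := by
                apply Finset.sum_le_sum
                intro τ _
                rw [Fintype.card_piFinset, Finset.prod_const, Finset.card_univ, Fintype.card_fin]
                exact Nat.pow_le_pow_left (badE_card hnM S hScard τ) m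
          _ ≤ 2 ^ n * (2 ^ M - 2 ^ (M - n)) ^ m := by
                rw [Finset.sum_const, smul_eq_mul]
                exact Nat.mul_le_mul_right _ (suppT_card S hScard)
    _ = (univ.powersetCard n).card * (2 ^ n * (2 ^ M - 2 ^ (M - n)) ^ m) := by
          rw [Finset.sum_const, smul_eq_mul]
    _ ≤ M ^ n * (2 ^ n * (2 ^ M - 2 ^ (M - n)) ^ m) := by
          apply Nat.mul_le_mul_right
          rw [Finset.card_powersetCard, Finset.card_univ, Fintype.card_fin]
          exact Nat.choose_le_pow M n
    _ = M ^ n * 2 ^ n * (2 ^ M - 2 ^ (M - n)) ^ m := by ring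
  exact absurd (lt_of_le_of_lt hchain hcount) (lt_irrefl _)

private lemma size_bound (n M : ℕ) (hn : 1 ≤ n) (hM : 4 ≤ M) :
    ((2 ^ n * (n * (Nat.log2 M + 2)) : ℕ) : ℝ)
      ≤ 2 ^ ((3:ℝ) * ((n : ℝ) + Real.logb 2 (Real.logb 2 (M : ℝ)) + 1)) := by
  have hM0 : (0:ℝ) < (M:ℝ) := by positivity
  have hlogM : (2:ℝ) ≤ Real.logb 2 (M:ℝ) := by
    calc (2:ℝ) = Real.logb 2 4 := by
          rw [show (4:ℝ) = 2 ^ (2:ℕ) by norm_num, Real.logb_pow]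
          simp
    _ ≤ Real.logb 2 (M:ℝ) := by
          apply Real.logb_le_logb_of_le (by norm_num) (by norm_num)
          exact_mod_cast hM
  have ht1 : (1:ℝ) ≤ Real.logb 2 (Real.logb 2 (M:ℝ)) := by
    calc (1:ℝ) = Real.logb 2 2 := (Real.logb_self_eq_one (by norm_num)).symm
    _ ≤ Real.logb 2 (Real.logb 2 (M:ℝ)) :=
          Real.logb_le_logb_of_le (by norm_num) (by norm_num) (by linarith)
  set t := Real.logb 2 (Real.logb 2 (M:ℝ)) with hts
  have hlog2 : ((Nat.log2 M : ℝ) + 2) ≤ 2 * Real.logb 2 (M:ℝ) := by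
    have h1 : (2:ℕ) ^ Nat.log2 M ≤ M := Nat.log2_self_le (by omega)
    have h2 : (Nat.log2 M : ℝ) ≤ Real.logb 2 (M:ℝ) := by
      calc (Nat.log2 M : ℝ) = Real.logb 2 ((2:ℝ) ^ (Nat.log2 M : ℕ)) := by
            rw [Real.logb_pow]
            simp
      _ ≤ Real.logb 2 (M:ℝ) := by
            apply Real.logb_le_logb_of_le (by norm_num) (by positivity)
            exact_mod_cast h1
    linarith
  have h2logM : 2 * Real.logb 2 (M:ℝ) = 2 ^ ((1:ℝ) + t) := by
    rw [Real.rpow_add (by norm_num), Real.rpow_one, hts,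
      Real.rpow_logb (by norm_num) (by norm_num) (by linarith)]
  have hnle : (n:ℝ) ≤ 2 ^ (n:ℝ) := by
    have := Nat.lt_two_pow_self (n := n)
    have h2 : ((n:ℝ)) < ((2 ^ n : ℕ) : ℝ) := by exact_mod_cast this
    rw [Nat.cast_pow] at h2
    calc (n:ℝ) ≤ ((2:ℝ) ^ (n:ℕ)) := le_of_lt h2
    _ = 2 ^ (n:ℝ) := (Real.rpow_natCast 2 n).symm
  have hcast : ((2 ^ n * (n * (Nat.log2 M + 2)) : ℕ) : ℝ)
      = 2 ^ (n:ℝ) * ((n:ℝ) * ((Nat.log2 M : ℝ) + 2)) := by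
    push_cast
    rw [Real.rpow_natCast]
  rw [hcast]
  have hp1 : (0:ℝ) ≤ 2 ^ (n:ℝ) := le_of_lt (Real.rpow_pos_of_pos (by norm_num) _)
  have hstep : 2 ^ (n:ℝ) * ((n:ℝ) * ((Nat.log2 M : ℝ) + 2))
      ≤ 2 ^ (n:ℝ) * (2 ^ (n:ℝ) * 2 ^ ((1:ℝ) + t)) := by
    apply mul_le_mul_of_nonneg_left _ hp1
    have h1 : (n:ℝ) * ((Nat.log2 M : ℝ) + 2) ≤ 2 ^ (n:ℝ) * 2 ^ ((1:ℝ) + t) := by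
      apply mul_le_mul hnle (by rw [← h2logM]; exact hlog2) _ hp1
      positivity
    exact h1
  calc 2 ^ (n:ℝ) * ((n:ℝ) * ((Nat.log2 M : ℝ) + 2))
      ≤ 2 ^ (n:ℝ) * (2 ^ (n:ℝ) * 2 ^ ((1:ℝ) + t)) := hstep
  _ = 2 ^ ((n:ℝ) + ((n:ℝ) + (1 + t))) := by
        simp only [Real.rpow_add (show (0:ℝ) < 2 by norm_num), Real.rpow_one]
  _ ≤ 2 ^ ((3:ℝ) * ((n : ℝ) + t + 1)) := by
        apply Real.rpow_le_rpow_of_exponent_le (by norm_num)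
        have hn' : (1:ℝ) ≤ (n:ℝ) := by exact_mod_cast hn
        linarith

/-- Global certification of bipartiteness with certificates of size `O(n + log log M)`. -/
theorem global_certification_bipartiteness :
    ∃ c₀ : ℝ, 0 < c₀ ∧
      ∀ (n M : ℕ), 1 ≤ n → n ≤ M → 4 ≤ M →
        ∃ (C : Type) (instC : Fintype C) (A : Fin M → Finset (Fin M) → C → Bool),
          (@Fintype.card C instC : ℝ) ≤
            2 ^ (c₀ * ((n : ℝ) + Real.logb 2 (Real.logb 2 (M : ℝ)) + 1)) ∧
          ∀ (V : Type) [Fintype V] [DecidableEq V] (G : SimpleGraph V) [DecidableRel G.Adj],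
            Fintype.card V = n →
            ∀ Id : V → Fin M, Function.Injective Id →
              ((∃ c : C, ∀ u : V, A (Id u) ((G.neighborFinset u).image Id) c = true) ↔
                ∃ φ : V → Fin 2, ∀ u v : V, G.Adj u v → φ u ≠ φ v) := by
  classical
  refine ⟨3, by norm_num, ?_⟩
  intro n M hn hnM hM
  obtain ⟨g, hg⟩ := exists_universal n M (2 ^ n * (n * (Nat.log2 M + 2)))
    (count_ineq n M hn hnM hM) hnM
  refine ⟨Fin (2 ^ n * (n * (Nat.log2 M + 2))), inferInstance,
    fun i s c => decide (∀ j ∈ s, g c j ≠ g c i), ?_, ?_⟩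
  · rw [Fintype.card_fin]
    exact size_bound n M hn hM
  intro V _ _ G _ hcardV Id hId
  have h01 : ∀ x : Fin 2, x = 0 ∨ x = 1 := by decide
  constructor
  · rintro ⟨c, hc⟩
    refine ⟨fun u => if g c (Id u) then 1 else 0, ?_⟩
    intro u v huv hne
    have h1 := of_decide_eq_true (hc u)
    have h2 : Id v ∈ (G.neighborFinset u).image Id :=
      Finset.mem_image_of_mem Id ((SimpleGraph.mem_neighborFinset G u v).2 huv)
    have h3 := h1 (Id v) h2
    apply h3
    by_cases hb : g c (Id u) <;> by_cases hb' : g c (Id v) <;> simp_all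
  · rintro ⟨φ, hφ⟩
    set χ : Fin M → Bool := fun i => decide (∃ u, Id u = i ∧ φ u = 1) with hχ
    have hScard : (Finset.univ.image Id).card = n := by
      rw [Finset.card_image_of_injective _ hId, Finset.card_univ, hcardV]
    obtain ⟨j, hj⟩ := hg (Finset.univ.image Id) hScard χ
    have hval : ∀ u : V, g j (Id u) = decide (φ u = 1) := by
      intro u
      rw [hj (Id u) (Finset.mem_image_of_mem Id (Finset.mem_univ u))]
      simp only [hχ]
      apply decide_eq_decide.2
      constructor
      · rintro ⟨w, hw, h1⟩
        rwa [hId hw] at h1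
      · intro h
        exact ⟨u, rfl, h⟩
    refine ⟨j, ?_⟩
    intro u
    simp only [decide_eq_true_eq]
    intro i hi
    obtain ⟨v, hv, rfl⟩ := Finset.mem_image.1 hi
    have hadj : G.Adj u v := (SimpleGraph.mem_neighborFinset G u v).1 hv
    have hne := hφ u v hadj
    rw [hval v, hval u]
    intro heq
    rcases h01 (φ u) with h1 | h1 <;> rcases h01 (φ v) with h2 | h2 <;> rw [h1, h2] at heq hne <;> simp at heq hne
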